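/- Let p be a prime with p ≡ 1 (mod 4) and let k be a unit modulo p of multiplicative order p−1 (a primitive root mod p). Then wt(p, k; p−1) ≤ (p+3)/4. Moreover, there exists a sequence i with deg(i) = (p−5)/4 and wt(p, k; i) ≤ (p+3)/4. -/

import Mathlib

/-- The set `Ω(i, λ) = { b₁k^{i₁} + ⋯ + b_r k^{i_r} mod n : |b_j| ≤ λ_j }` in `ℤ/nℤ`. -/
def OmegaSet (n : ℕ) (k : (ZMod n)ˣ) {r : ℕ} (i : Fin r → ℕ) (lam : Fin r → ℕ) :
    Set (ZMod n) :=
  { x | ∃ b : Fin r → ℤ, (∀ j, |b j| ≤ (lam j : ℤ)) ∧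
      x = ∑ j, (b j : ZMod n) * ((k ^ i j : (ZMod n)ˣ) : ZMod n) }

/-- A `sequence`: a strictly decreasing tuple `α−1 ≥ i₁ > i₂ > ⋯ > i_r ≥ 0`. -/
def IsSeq (α : ℕ) {r : ℕ} (i : Fin r → ℕ) : Prop :=
  (∀ j, i j ≤ α - 1) ∧ StrictAnti i

/-- `wt(n, k; i)`: the minimal total weight `λ₁ + ⋯ + λ_r` over tuples `λ`
with `Ω(i,λ) = ℤ/nℤ`. -/
noncomputable def wtSeq (n : ℕ) (k : (ZMod n)ˣ) {r : ℕ} (i : Fin r → ℕ) : ℕ :=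
  sInf { s | ∃ lam : Fin r → ℕ, OmegaSet n k i lam = Set.univ ∧ ∑ j, lam j = s }

/-- The maximal sequence `Δ : α−1 > α−2 > ⋯ > 1 > 0`. -/
def DeltaSeq (α : ℕ) : Fin α → ℕ := fun j => α - 1 - (j : ℕ)

/-- `wt(n, k; α) := wt(n, k; Δ)`. -/
noncomputable def wtAlpha (n : ℕ) (k : (ZMod n)ˣ) (α : ℕ) : ℕ :=
  wtSeq n k (DeltaSeq α)

/-- The degree of a sequence: its largest entry. -/
noncomputable def degSeq {r : ℕ} (i : Fin r → ℕ) : ℕ := sSup (Set.range i)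

/-- The codegree of a sequence: its smallest nonzero entry. -/
noncomputable def codegSeq {r : ℕ} (i : Fin r → ℕ) : ℕ :=
  sInf { v | v ∈ Set.range i ∧ v ≠ 0 }

/-- A minimal prime sequence realizing `wt(n,k;α)`: a reduced sequence (i.e. one
containing `0`) of weight `wt(n,k;α)` such that no proper reduced subsequence
has weight `wt(n,k;α)`. -/
def IsMinimalPrimeSeq (n : ℕ) (k : (ZMod n)ˣ) (α : ℕ) {r : ℕ} (i : Fin r → ℕ) : Prop :=
  IsSeq α i ∧ 0 ∈ Set.range i ∧ wtSeq n k i = wtAlpha n k α ∧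
    ∀ (q : ℕ) (i₀ : Fin q → ℕ), IsSeq α i₀ → 0 ∈ Set.range i₀ →
      Set.range i₀ ⊆ Set.range i → Set.range i₀ ≠ Set.range i →
      wtSeq n k i₀ ≠ wtAlpha n k α

/-- `deg(n,k;α)`: the smallest degree of a minimal prime sequence realizing `wt(n,k;α)`. -/
noncomputable def degNK (n : ℕ) (k : (ZMod n)ˣ) (α : ℕ) : ℕ :=
  sInf { d | ∃ (r : ℕ) (i : Fin r → ℕ), IsMinimalPrimeSeq n k α i ∧ degSeq i = d }

section Aux

open Finset

/-- Integer decomposition: any `y` with `|y| ≤ 2m+2` is `2a+b` with `|a| ≤ m`, `|b| ≤ 2`. -/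
lemma intDecomp : ∀ (m : ℕ) (y : ℤ), |y| ≤ 2*(m:ℤ)+2 →
    ∃ a b : ℤ, |a| ≤ (m:ℤ) ∧ |b| ≤ 2 ∧ y = 2*a + b := by
  intro m
  induction m with
  | zero =>
    intro y hy
    exact ⟨0, y, by simp, by simpa using hy, by ring⟩
  | succ n ih =>
    intro y hy
    push_cast at hy
    rcases le_or_gt |y| (2*(n:ℤ)+2) with h | h
    · obtain ⟨a, b, h1, h2, h3⟩ := ih y h
      exact ⟨a, b, h1.trans (by push_cast; omega), h2, h3⟩
    · rw [abs_le] at hy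
      rw [lt_abs] at h
      rcases h with h | h
      · refine ⟨(n:ℤ)+1, y - 2*((n:ℤ)+1), ?_, ?_, by ring⟩
        · rw [abs_le]; omega
        · rw [abs_le]; omega
      · refine ⟨-((n:ℤ)+1), y + 2*((n:ℤ)+1), ?_, ?_, by ring⟩
        · rw [abs_le]; omega
        · rw [abs_le]; omega

lemma sum_pair_nat {r : ℕ} (jd j0 : Fin r) (hne : jd ≠ j0) (ld l0 : ℕ) :
    ∑ j, (if j = jd then ld else if j = j0 then l0 else 0) = ld + l0 := by
  rw [Finset.sum_eq_add_of_mem jd j0 (Finset.mem_univ _) (Finset.mem_univ _) hne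
    (fun c _ hc => by simp [hc.1, hc.2])]
  simp [Ne.symm hne]

lemma sum_single_nat {r : ℕ} (j0 : Fin r) (l0 : ℕ) :
    ∑ j, (if j = j0 then l0 else 0) = l0 := by
  rw [Finset.sum_eq_single_of_mem j0 (Finset.mem_univ _)
    (fun c _ hc => by simp [hc])]
  simp

lemma omegaSet_eq_univ_pair (p : ℕ) (k : (ZMod p)ˣ) {r : ℕ} (i : Fin r → ℕ)
    (jd j0 : Fin r) (hne : jd ≠ j0) (d : ℕ) (hd : i jd = d) (h0 : i j0 = 0)
    (ld l0 : ℕ)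
    (hcov : ∀ x : ZMod p, ∃ c1 c0 : ℤ, |c1| ≤ (ld:ℤ) ∧ |c0| ≤ (l0:ℤ) ∧
      x = (c1 : ZMod p) * ((k : ZMod p))^d + (c0 : ZMod p)) :
    OmegaSet p k i (fun j => if j = jd then ld else if j = j0 then l0 else 0) = Set.univ := by
  apply Set.eq_univ_of_forall
  intro x
  obtain ⟨c1, c0, hc1, hc0, hx⟩ := hcov x
  refine ⟨fun j => if j = jd then c1 else if j = j0 then c0 else 0, ?_, ?_⟩
  · intro j
    by_cases h1 : j = jd
    · simp only [if_pos h1]; exact hc1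
    · by_cases h2 : j = j0
      · simp only [if_neg h1, if_pos h2]; exact hc0
      · simp only [if_neg h1, if_neg h2]; simp
  · rw [Finset.sum_eq_add_of_mem jd j0 (Finset.mem_univ _) (Finset.mem_univ _) hne
      (fun c _ hc => by simp [hc.1, hc.2])]
    simp only [if_pos rfl, if_neg (Ne.symm hne), hd, h0, pow_zero, Units.val_one, mul_one,
      Units.val_pow_eq_pow_val]
    exact hx

lemma omegaSet_eq_univ_single (p : ℕ) (k : (ZMod p)ˣ) {r : ℕ} (i : Fin r → ℕ)
    (j0 : Fin r) (h0 : i j0 = 0) (l0 : ℕ)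
    (hcov : ∀ x : ZMod p, ∃ c0 : ℤ, |c0| ≤ (l0:ℤ) ∧ x = (c0 : ZMod p)) :
    OmegaSet p k i (fun j => if j = j0 then l0 else 0) = Set.univ := by
  apply Set.eq_univ_of_forall
  intro x
  obtain ⟨c0, hc0, hx⟩ := hcov x
  refine ⟨fun j => if j = j0 then c0 else 0, ?_, ?_⟩
  · intro j
    by_cases h1 : j = j0
    · simp only [if_pos h1]; exact hc0
    · simp only [if_neg h1]; simp
  · rw [Finset.sum_eq_single_of_mem j0 (Finset.mem_univ _)
      (fun c _ hc => by simp [hc])]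
    simp only [if_pos rfl, h0, pow_zero, Units.val_one, mul_one]
    exact hx

/-- The key arithmetic covering lemma. -/
lemma key_cover (p m : ℕ) (hp : p.Prime) (hpm : p = 4*m+5)
    (k : (ZMod p)ˣ) (hk : orderOf k = p - 1) :
    ∃ d ld l0 : ℕ, d ≤ m ∧ (1 ≤ d ∨ ld = 0) ∧ ld + l0 = m + 2 ∧
      ∀ x : ZMod p, ∃ c1 c0 : ℤ, |c1| ≤ (ld:ℤ) ∧ |c0| ≤ (l0:ℤ) ∧
        x = (c1 : ZMod p) * ((k : ZMod p))^d + (c0 : ZMod p) := by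
  haveI : Fact p.Prime := ⟨hp⟩
  set K : ZMod p := ((k : (ZMod p)ˣ) : ZMod p) with hK
  have hval : ∀ x : ZMod p, |x.valMinAbs| ≤ 2*(m:ℤ)+2 := by
    intro x
    have h1 := ZMod.natAbs_valMinAbs_le x
    have h2 : p / 2 = 2*m+2 := by omega
    rw [h2] at h1
    rw [Int.abs_eq_natAbs]
    exact_mod_cast h1
  have hcard : Fintype.card (ZMod p)ˣ = p - 1 := ZMod.card_units p
  have hord : orderOf k = 4*m+4 := by rw [hk]; omega
  have hk1 : k ^ (4*m+4) = 1 := by rw [← hord]; exact pow_orderOf_eq_one k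
  have hK1 : K ^ (4*m+4) = 1 := by
    rw [hK, ← Units.val_pow_eq_pow_val, hk1, Units.val_one]
  have hKh : K ^ (2*m+2) = -1 := by
    have hsq : K^(2*m+2) * K^(2*m+2) = 1 := by
      rw [← pow_add, show 2*m+2+(2*m+2) = 4*m+4 from by ring]; exact hK1
    rcases mul_self_eq_one_iff.mp hsq with h | h
    · exfalso
      have hu : k ^ (2*m+2) = 1 := by
        apply Units.ext
        rw [Units.val_pow_eq_pow_val, Units.val_one]; exact h
      exact pow_ne_one_of_lt_orderOf (by omega) (by rw [hord]; omega) hu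
    · exact h
  have htop : Subgroup.zpowers k = ⊤ := by
    apply Subgroup.eq_top_of_card_eq
    rw [Nat.card_zpowers, hk, Nat.card_eq_fintype_card, hcard]
  have h2ne : (2 : ZMod p) ≠ 0 := by
    intro h
    have h' : ((2:ℕ) : ZMod p) = 0 := by exact_mod_cast h
    have := Nat.le_of_dvd two_pos ((ZMod.natCast_eq_zero_iff 2 p).mp h')
    omega
  obtain ⟨g, hg⟩ := isUnit_iff_ne_zero.mpr h2ne
  have hgmem : g ∈ Submonoid.powers k := by
    rw [mem_powers_iff_mem_zpowers, htop]; exact Subgroup.mem_top g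
  obtain ⟨u, hu⟩ := hgmem
  have hu' : k ^ u = g := hu
  have hKu : K ^ u = 2 := by
    rw [hK, ← Units.val_pow_eq_pow_val, hu', hg]
  obtain ⟨q, v, hvlt, huv⟩ : ∃ q v, v < 2*m+2 ∧ u = (2*m+2)*q + v :=
    ⟨u / (2*m+2), u % (2*m+2), Nat.mod_lt _ (by omega), (Nat.div_add_mod u (2*m+2)).symm⟩
  set e : ℤ := (-1)^q with he_def
  have he : e = 1 ∨ e = -1 := neg_one_pow_eq_or ℤ q
  have hee : ((e:ZMod p)) * ((e:ZMod p)) = 1 := by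
    rcases he with h | h <;> rw [h] <;> norm_num
  have h2e : (2 : ZMod p) = (e : ZMod p) * K^v := by
    rw [← hKu, huv, pow_add, pow_mul, hKh, he_def]
    push_cast
    ring
  rcases Nat.lt_trichotomy v (m+1) with hv1 | hv1 | hv1
  · -- v ≤ m
    by_cases hv0 : v = 0
    · exfalso
      rw [hv0, pow_zero, mul_one] at h2e
      rcases he with h | h <;> rw [h] at h2e
      · have h1 : ((1:ℕ) : ZMod p) = 0 := by push_cast; linear_combination h2e
        have := Nat.le_of_dvd one_pos ((ZMod.natCast_eq_zero_iff 1 p).mp h1)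
        omega
      · have h3 : ((3:ℕ) : ZMod p) = 0 := by push_cast; linear_combination h2e
        have := Nat.le_of_dvd (by norm_num) ((ZMod.natCast_eq_zero_iff 3 p).mp h3)
        omega
    · refine ⟨v, m, 2, by omega, Or.inl (by omega), by omega, ?_⟩
      intro x
      have hy := hval x
      obtain ⟨a, b, ha, hb, hab⟩ := intDecomp m x.valMinAbs hy
      have hxy : ((x.valMinAbs : ℤ) : ZMod p) = x := ZMod.coe_valMinAbs x
      have hcast : ((x.valMinAbs : ℤ) : ZMod p) = 2*(a : ZMod p) + (b : ZMod p) := by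
        rw [hab]; push_cast; ring
      refine ⟨e*a, b, ?_, hb, ?_⟩
      · rcases he with h | h <;> rw [h] <;> simpa using ha
      · push_cast
        linear_combination (-1 : ZMod p) * hxy + hcast + (a : ZMod p) * h2e
  · -- v = m+1 forces p = 5
    have e1 : (2:ZMod p)*2 = ((e:ZMod p)*(e:ZMod p)) * (K^v * K^v) := by
      rw [h2e]; ring
    rw [hee, one_mul, ← pow_add, hv1, show m+1+(m+1) = 2*m+2 from by ring, hKh] at e1
    have h5 : ((5:ℕ) : ZMod p) = 0 := by push_cast; linear_combination e1
    have hdvd := (ZMod.natCast_eq_zero_iff 5 p).mp h5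
    have hle : p ≤ 5 := Nat.le_of_dvd (by norm_num) hdvd
    have hm0 : m = 0 := by omega
    refine ⟨0, 0, m+2, by omega, Or.inr rfl, by omega, ?_⟩
    intro x
    refine ⟨0, x.valMinAbs, by simp, ?_, ?_⟩
    · have := hval x
      have h22 : (2*(m:ℤ)+2) = ((m:ℤ)+2) := by rw [hm0]; norm_num
      rw [h22] at this
      exact_mod_cast this
    · rw [pow_zero]
      simp [ZMod.coe_valMinAbs]
  · -- m+2 ≤ v ≤ 2m+1 : use d = 2m+2-v
    set d : ℕ := 2*m+2-v with hd_def
    have hdm : 1 ≤ d ∧ d ≤ m := by omega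
    have h2d : (2:ZMod p) * K^d = -(e:ZMod p) := by
      have e1 : (2:ZMod p) * K^d = (e:ZMod p) * (K^v * K^d) := by rw [h2e]; ring
      rw [← pow_add, show v + d = 2*m+2 from by omega, hKh] at e1
      rw [e1]; ring
    refine ⟨d, 2, m, hdm.2, Or.inl hdm.1, by omega, ?_⟩
    intro x
    have hw := hval ((2:ZMod p)*x)
    obtain ⟨a, b, ha, hb, hab⟩ := intDecomp m _ hw
    have hwc : ((((2:ZMod p)*x).valMinAbs : ℤ) : ZMod p) = 2*x := ZMod.coe_valMinAbs _
    have habc : ((((2:ZMod p)*x).valMinAbs : ℤ) : ZMod p) = 2*(a : ZMod p) + (b : ZMod p) := by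
      rw [hab]; push_cast; ring
    refine ⟨-e*b, a, ?_, ha, ?_⟩
    · rcases he with h | h <;> rw [h] <;> simpa using hb
    · apply mul_left_cancel₀ h2ne
      push_cast
      linear_combination ((e:ZMod p)*(b:ZMod p)) * h2d - (b:ZMod p) * hee - hwc + habc

end Aux

/-- If `p ≡ 1 (mod 4)` is prime and `k` is a primitive root mod `p`, then
`wt(p, k; p−1) ≤ (p+3)/4`, and moreover there is a sequence `i` of degree
`(p−5)/4` with `wt(p, k; i) ≤ (p+3)/4`. -/
theorem wt_prime_one_mod_four (p : ℕ) (hp : p.Prime) (hp1 : p % 4 = 1)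
    (k : (ZMod p)ˣ) (hk : orderOf k = p - 1) :
    wtAlpha p k (p - 1) ≤ (p + 3) / 4 ∧
    ∃ (r : ℕ) (i : Fin r → ℕ), 0 < r ∧ IsSeq (p - 1) i ∧
      degSeq i = (p - 5) / 4 ∧ wtSeq p k i ≤ (p + 3) / 4 := by
  have hp2 := hp.two_le
  obtain ⟨m, hpm⟩ : ∃ m, p = 4*m+5 := ⟨(p-5)/4, by omega⟩
  obtain ⟨d, ld, l0, hdm, hd1, hsum, hcov⟩ := key_cover p m hp hpm k hk
  have hcov0 : ld = 0 → ∀ x : ZMod p, ∃ c0 : ℤ, |c0| ≤ (l0:ℤ) ∧ x = (c0 : ZMod p) := by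
    intro h1 x
    obtain ⟨c1, c0, hc1, hc0, hx⟩ := hcov x
    have hc1' : |c1| ≤ 0 := by rw [h1] at hc1; exact_mod_cast hc1
    have hc10 : c1 = 0 := abs_nonpos_iff.mp hc1'
    refine ⟨c0, hc0, ?_⟩
    rw [hx, hc10]
    push_cast
    ring
  constructor
  · -- wtAlpha bound
    unfold wtAlpha wtSeq
    have hltd : p - 2 - d < p - 1 := by omega
    have hlt0 : p - 2 < p - 1 := by omega
    have hd' : DeltaSeq (p-1) ⟨p-2-d, hltd⟩ = d := by
      show p - 1 - 1 - (p - 2 - d) = d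
      omega
    have h0' : DeltaSeq (p-1) ⟨p-2, hlt0⟩ = 0 := by
      show p - 1 - 1 - (p - 2) = 0
      omega
    rcases hd1 with h1 | h1
    · have hne : (⟨p-2-d, hltd⟩ : Fin (p-1)) ≠ ⟨p-2, hlt0⟩ := by
        rw [Fin.ne_iff_vne]
        show p - 2 - d ≠ p - 2
        omega
      apply Nat.sInf_le
      exact ⟨_, omegaSet_eq_univ_pair p k _ _ _ hne d hd' h0' ld l0 hcov,
        by rw [sum_pair_nat _ _ hne ld l0]; omega⟩
    · apply Nat.sInf_le
      exact ⟨_, omegaSet_eq_univ_single p k _ _ h0' l0 (hcov0 h1),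
        by rw [sum_single_nat _ l0]; omega⟩
  · -- the degree-(p-5)/4 sequence
    refine ⟨m+1, fun j => m - (j:ℕ), Nat.succ_pos m, ⟨?_, ?_⟩, ?_, ?_⟩
    · intro j
      have := j.isLt
      show m - (j:ℕ) ≤ p - 1 - 1
      omega
    · intro a b hab
      have h1 : (a:ℕ) < (b:ℕ) := hab
      have h2 : (b:ℕ) < m+1 := b.isLt
      show m - (b:ℕ) < m - (a:ℕ)
      omega
    · have hdeg : sSup (Set.range (fun j : Fin (m+1) => m - (j:ℕ))) = m := by
        apply IsGreatest.csSup_eq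
        constructor
        · exact ⟨⟨0, Nat.succ_pos m⟩, rfl⟩
        · rintro x ⟨j, rfl⟩
          exact Nat.sub_le m j
      show sSup (Set.range (fun j : Fin (m+1) => m - (j:ℕ))) = (p-5)/4
      rw [hdeg]
      omega
    · unfold wtSeq
      have hltd : m - d < m + 1 := by omega
      have hlt0 : m < m + 1 := by omega
      have hd' : (fun j : Fin (m+1) => m - (j:ℕ)) ⟨m-d, hltd⟩ = d := by
        show m - (m - d) = d
        omega
      have h0' : (fun j : Fin (m+1) => m - (j:ℕ)) ⟨m, hlt0⟩ = 0 := by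
        show m - m = 0
        omega
      rcases hd1 with h1 | h1
      · have hne : (⟨m-d, hltd⟩ : Fin (m+1)) ≠ ⟨m, hlt0⟩ := by
          rw [Fin.ne_iff_vne]
          show m - d ≠ m
          omega
        apply Nat.sInf_le
        exact ⟨_, omegaSet_eq_univ_pair p k _ _ _ hne d hd' h0' ld l0 hcov,
          by rw [sum_pair_nat _ _ hne ld l0]; omega⟩
      · apply Nat.sInf_le
        exact ⟨_, omegaSet_eq_univ_single p k _ _ h0' l0 (hcov0 h1),
          by rw [sum_single_nat _ l0]; omega⟩
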